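/- Wasserstein separation of perturbed Gaussian densities: Fix d ≥ 1, j ∈ ℕ*, and set m := 2^{dj}. Let ψ : ℝ^d → ℝ be a Lipschitz continuously differentiable function with support contained in (−1,1)^d, ∫ ψ = 0 and ∫ ψ² = 1, and let M ≥ Lip(ψ) with M > 0, where Lip(ψ) is the Lipschitz constant of ψ. For k ∈ {0,…,2^j−1}^d define ψ_k(x) := √m·ψ(2^j x − (2^j − 1)·𝟙 + 2k), where 𝟙 = (1,…,1) ∈ ℝ^d. Let g₀(x) := (2π)^{−d/2} exp(−‖x‖²/2) and, for ε ∈ {−1,1}^{{0,…,2^j−1}^d} and c₁ > 0, set g_ε := g₀ + c₁·Σ_k ε_k·ψ_k. If g_ε ≥ 0 and g_{ε′} ≥ 0 (so both are probability densities), then W₁(g_ε·Leb, g_{ε′}·Leb) ≥ 2·c₁·2^{−j(d/2+1)}·M^{−1}·ω(ε, ε′), where ω(ε, ε′) := #{k : ε_k ≠ ε′_k} is the Hamming distance. -/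

import Mathlib

open MeasureTheory Real Set

noncomputable section

/-- `ℝ^d` with the Euclidean structure. -/
abbrev Euc (d : ℕ) := EuclideanSpace ℝ (Fin d)

/-- 1-Wasserstein distance between two measures on `ℝ^d`, in dual
(Kantorovich–Rubinstein) form: `W₁(P,Q) = sup_{f 1-Lipschitz} ∫ f dP - ∫ f dQ`. -/
def W1 {d : ℕ} (P Q : Measure (Euc d)) : ℝ :=
  ⨆ f : {f : Euc d → ℝ // LipschitzWith 1 f}, ((∫ x, f.1 x ∂P) - ∫ x, f.1 x ∂Q)

/-- Density of the standard Gaussian `N(0, I_d)` on `ℝ^d`. -/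
def stdGauss (d : ℕ) (x : Euc d) : ℝ :=
  (2 * π) ^ (-(d : ℝ) / 2) * Real.exp (-‖x‖ ^ 2 / 2)

/-- Rescaled and translated bump `ψ_k(x) = √m ψ(2^j x - (2^j - 1) 𝟙 + 2k)`,
with `m = 2^{dj}`. -/
def psiK (d j : ℕ) (ψ : Euc d → ℝ) (k : Fin d → Fin (2 ^ j)) (x : Euc d) : ℝ :=
  Real.sqrt ((2 : ℝ) ^ (d * j)) *
    ψ (WithLp.toLp 2 (fun i => (2 : ℝ) ^ j * x i - ((2 : ℝ) ^ j - 1) + 2 * ((k i : ℕ) : ℝ) : Fin d → ℝ))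

/-- Perturbed Gaussian density `g_ε = g₀ + c₁ Σ_k ε_k ψ_k`. -/
def gPerturbed (d j : ℕ) (ψ : Euc d → ℝ) (c₁ : ℝ)
    (ε : (Fin d → Fin (2 ^ j)) → ℝ) (x : Euc d) : ℝ :=
  stdGauss d x + c₁ * ∑ k, ε k * psiK d j ψ k x

open scoped ENNReal NNReal


/-- Sum of 1-Lipschitz functions with disjoint "supports" is 1-Lipschitz. -/
lemma lipschitz_sum_of_disjoint {E : Type*} [NormedAddCommGroup E] [NormedSpace ℝ E]
    {ι : Type*} [Fintype ι] (h : ι → E → ℝ) (B : ι → Set E)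
    (hlip : ∀ i, LipschitzWith 1 (h i))
    (hvan : ∀ i x, x ∉ B i → h i x = 0)
    (hdisj : ∀ i i', i ≠ i' → B i ∩ B i' = ∅) :
    LipschitzWith 1 (fun x => ∑ i, h i x) := by
  have hbound : ∀ i (x y : E), y ∉ B i → |h i x| ≤ dist x y := by
    intro i x y hy
    have := (hlip i).dist_le_mul x y
    rw [NNReal.coe_one, one_mul, Real.dist_eq, hvan i y hy, sub_zero] at this
    exact this
  have hsingle : ∀ i (x : E), x ∈ B i → (∑ i', h i' x) = h i x := by
    intro i x hx
    refine Finset.sum_eq_single i (fun i' _ hne => ?_) (fun habs => absurd (Finset.mem_univ i) habs)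
    refine hvan i' x (fun hx' => ?_)
    have hmem : x ∈ B i' ∩ B i := ⟨hx', hx⟩
    rw [hdisj i' i hne] at hmem
    exact absurd hmem (Set.notMem_empty x)
  refine LipschitzWith.of_dist_le_mul (fun x y => ?_)
  rw [NNReal.coe_one, one_mul, Real.dist_eq]
  by_cases hx : ∃ i, x ∈ B i
  · obtain ⟨i, hxi⟩ := hx
    by_cases hy : ∃ i', y ∈ B i'
    · obtain ⟨i', hyi⟩ := hy
      rw [hsingle i x hxi, hsingle i' y hyi]
      by_cases hii : i = i'
      · subst hii
        have := (hlip i).dist_le_mul x y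
        rwa [NNReal.coe_one, one_mul, Real.dist_eq] at this
      · -- disjoint boxes: |h i x| + |h i' y| ≤ dist x y
        have key : |h i x| + |h i' y| ≤ dist x y := by
          by_contra hc
          push_neg at hc
          set rx := |h i x| with hrx
          set ry := |h i' y| with hry
          have hrx0 : 0 ≤ rx := abs_nonneg _
          have hry0 : 0 ≤ ry := abs_nonneg _
          have ballx : ∀ z, dist x z < rx → z ∈ B i := by
            intro z hz
            by_contra hz'
            exact absurd (hbound i x z hz') (not_le.mpr hz)
          have bally : ∀ z, dist y z < ry → z ∈ B i' := by
            intro z hz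
            by_contra hz'
            exact absurd (hbound i' y z hz') (not_le.mpr hz)
          rcases eq_or_lt_of_le hrx0 with hrx0' | hrx0'
          · -- rx = 0 : then ry > dist x y, but x ∉ B i'
            have hxB : x ∉ B i' := by
              intro hmem
              have h2 : x ∈ B i ∩ B i' := ⟨hxi, hmem⟩
              rw [hdisj i i' hii] at h2
              exact absurd h2 (Set.notMem_empty x)
            have : ry ≤ dist y x := hbound i' y x hxB
            rw [dist_comm] at this
            nlinarith
          rcases eq_or_lt_of_le hry0 with hry0' | hry0'
          · have hyB : y ∉ B i := by
              intro hmem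
              have h2 : y ∈ B i ∩ B i' := ⟨hmem, hyi⟩
              rw [hdisj i i' hii] at h2
              exact absurd h2 (Set.notMem_empty y)
            have : rx ≤ dist x y := hbound i x y hyB
            nlinarith
          · -- both positive; construct point on segment
            have hsum : 0 < rx + ry := by linarith
            set t : ℝ := rx / (rx + ry) with ht
            have ht0 : 0 < t := div_pos hrx0' hsum
            have ht1 : t < 1 := by
              rw [div_lt_one hsum]; linarith
            set z : E := x + t • (y - x) with hz
            have hdx : dist x z = t * dist x y := by
              rw [dist_eq_norm, dist_eq_norm]
              have : x - z = t • (x - y) := by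
                rw [hz]; module
              rw [this, norm_smul, Real.norm_eq_abs, abs_of_pos ht0]
            have hdy : dist y z = (1 - t) * dist x y := by
              rw [dist_eq_norm, dist_eq_norm]
              have : y - z = (1 - t) • (y - x) := by
                rw [hz]; module
              rw [this, norm_smul, Real.norm_eq_abs, abs_of_pos (by linarith), norm_sub_rev]
            have hzx : z ∈ B i := by
              apply ballx
              rw [hdx]
              calc t * dist x y < t * (rx + ry) := by
                    exact mul_lt_mul_of_pos_left hc ht0
                _ = rx := by rw [ht]; field_simp
            have hzy : z ∈ B i' := by
              apply bally
              rw [hdy]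
              calc (1 - t) * dist x y < (1 - t) * (rx + ry) := by
                    exact mul_lt_mul_of_pos_left hc (by linarith)
                _ = ry := by rw [ht]; field_simp; ring
            have h2 : z ∈ B i ∩ B i' := ⟨hzx, hzy⟩
            rw [hdisj i i' hii] at h2
            exact absurd h2 (Set.notMem_empty z)
        calc |h i x - h i' y| ≤ |h i x| + |h i' y| := abs_sub _ _
          _ ≤ dist x y := key
    · push_neg at hy
      have hy0 : (∑ i', h i' y) = 0 := Finset.sum_eq_zero fun i' _ => hvan i' y (hy i')
      rw [hsingle i x hxi, hy0, sub_zero]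
      have hyB : y ∉ B i := hy i
      exact hbound i x y hyB
  · push_neg at hx
    have hx0 : (∑ i', h i' x) = 0 := Finset.sum_eq_zero fun i' _ => hvan i' x (hx i')
    by_cases hy : ∃ i', y ∈ B i'
    · obtain ⟨i', hyi⟩ := hy
      rw [hx0, hsingle i' y hyi, zero_sub, abs_neg]
      have := hbound i' y x (hx i')
      rwa [dist_comm] at this
    · push_neg at hy
      have hy0 : (∑ i', h i' y) = 0 := Finset.sum_eq_zero fun i' _ => hvan i' y (hy i')
      rw [hx0, hy0, sub_zero, abs_zero]
      exact dist_nonneg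


/-- The affine map `x ↦ 2^j x + v_k`. -/
def vK (d j : ℕ) (k : Fin d → Fin (2 ^ j)) : Euc d :=
  WithLp.toLp 2 (fun i => 2 * ((k i : ℕ) : ℝ) - ((2 : ℝ) ^ j - 1) : Fin d → ℝ)

def Tt (d j : ℕ) (k : Fin d → Fin (2 ^ j)) (x : Euc d) : Euc d :=
  (2 : ℝ) ^ j • x + vK d j k

lemma Tt_apply (d j : ℕ) (k : Fin d → Fin (2 ^ j)) (x : Euc d) (i : Fin d) :
    Tt d j k x i = (2 : ℝ) ^ j * x i + (2 * ((k i : ℕ) : ℝ) - ((2 : ℝ) ^ j - 1)) := rfl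

lemma psiK_eq (d j : ℕ) (ψ : Euc d → ℝ) (k : Fin d → Fin (2 ^ j)) (x : Euc d) :
    psiK d j ψ k x = Real.sqrt ((2 : ℝ) ^ (d * j)) * ψ (Tt d j k x) := by
  unfold psiK
  congr 1
  congr 1
  ext i
  rw [Tt_apply]
  change (2:ℝ)^j * x i - ((2:ℝ)^j - 1) + 2 * ((k i : ℕ) : ℝ) = _
  ring

/-- The open box where `ψ_k` lives. -/
def Bx (d j : ℕ) (k : Fin d → Fin (2 ^ j)) : Set (Euc d) :=
  {x | ∀ i, Tt d j k x i ∈ Set.Ioo (-1 : ℝ) 1}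

lemma Bx_disjoint (d j : ℕ) {k k' : Fin d → Fin (2 ^ j)} (hkk : k ≠ k') :
    Bx d j k ∩ Bx d j k' = ∅ := by
  rw [Set.eq_empty_iff_forall_notMem]
  rintro x ⟨hx, hx'⟩
  apply hkk
  funext i
  have h1 := hx i
  have h2 := hx' i
  rw [Tt_apply] at h1 h2
  rw [Set.mem_Ioo] at h1 h2
  have hZ : ((k i : ℕ) : ℤ) = ((k' i : ℕ) : ℤ) := by
    have l1 : (((k i : ℕ) : ℤ) : ℝ) < (((k' i : ℕ) : ℤ) : ℝ) + 1 := by push_cast; linarith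
    have l2 : (((k' i : ℕ) : ℤ) : ℝ) < (((k i : ℕ) : ℤ) : ℝ) + 1 := by push_cast; linarith
    have m1 : ((k i : ℕ) : ℤ) < ((k' i : ℕ) : ℤ) + 1 := by exact_mod_cast l1
    have m2 : ((k' i : ℕ) : ℤ) < ((k i : ℕ) : ℤ) + 1 := by exact_mod_cast l2
    omega
  have : (k i : ℕ) = (k' i : ℕ) := by exact_mod_cast hZ
  exact Fin.ext this


lemma support_psiK (d j : ℕ) (ψ : Euc d → ℝ)
    (hψsupp : Function.support ψ ⊆ {x : Euc d | ∀ i, x i ∈ Set.Ioo (-1 : ℝ) 1})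
    (k : Fin d → Fin (2 ^ j)) :
    Function.support (psiK d j ψ k) ⊆ Bx d j k := by
  intro x hx
  rw [Function.mem_support, psiK_eq] at hx
  have hψne : ψ (Tt d j k x) ≠ 0 := by
    intro h0; apply hx; rw [h0, mul_zero]
  exact hψsupp hψne

lemma Bx_subset_ball (d j : ℕ) (k : Fin d → Fin (2 ^ j)) :
    Bx d j k ⊆ Metric.closedBall (0 : Euc d) (Real.sqrt d) := by
  intro x hx
  rw [Metric.mem_closedBall, dist_zero_right]
  have hcoord : ∀ i, |x i| ≤ 1 := by
    intro i
    have h := hx i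
    rw [Tt_apply, Set.mem_Ioo] at h
    have hR : (1 : ℝ) ≤ (2 : ℝ) ^ j := one_le_pow₀ (by norm_num)
    have hk0 : (0 : ℝ) ≤ ((k i : ℕ) : ℝ) := Nat.cast_nonneg _
    have hk1 : ((k i : ℕ) : ℝ) ≤ (2 : ℝ) ^ j - 1 := by
      have : ((k i : ℕ) : ℝ) + 1 ≤ (2 : ℝ) ^ j := by
        exact_mod_cast Nat.succ_le_of_lt (k i).isLt
      linarith
    rw [abs_le]
    constructor <;> nlinarith [h.1, h.2]
  calc ‖x‖ = Real.sqrt (∑ i, ‖x i‖ ^ 2) := by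
        rw [EuclideanSpace.norm_eq]
    _ ≤ Real.sqrt (∑ _i : Fin d, (1 : ℝ)) := by
        apply Real.sqrt_le_sqrt
        apply Finset.sum_le_sum
        intro i _
        rw [Real.norm_eq_abs]
        calc |x i| ^ 2 ≤ 1 ^ 2 := by
              apply sq_le_sq'
              · linarith [abs_nonneg (x i), hcoord i]
              · exact hcoord i
          _ = 1 := one_pow 2
    _ = Real.sqrt d := by rw [Finset.sum_const, Finset.card_univ, Fintype.card_fin]; simp

lemma continuous_Tt (d j : ℕ) (k : Fin d → Fin (2 ^ j)) : Continuous (Tt d j k) := by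
  unfold Tt
  exact (continuous_const_smul _).add continuous_const

lemma lipschitz_Tt (d j : ℕ) (k : Fin d → Fin (2 ^ j)) :
    LipschitzWith ((2 : ℝ) ^ j).toNNReal (Tt d j k) := by
  apply LipschitzWith.of_dist_le_mul
  intro x y
  unfold Tt
  rw [dist_add_right, dist_eq_norm, ← smul_sub, norm_smul, Real.norm_eq_abs,
    abs_of_pos (by positivity : (0:ℝ) < (2:ℝ)^j), Real.coe_toNNReal _ (by positivity),
    dist_eq_norm]

/-- Change of variables for the affine map. -/
lemma integral_comp_Tt (d j : ℕ) (k : Fin d → Fin (2 ^ j)) (F : Euc d → ℝ) :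
    ∫ x, F (Tt d j k x) = (((2 : ℝ) ^ j) ^ d)⁻¹ * ∫ y, F y := by
  have hR : (0 : ℝ) < (2 : ℝ) ^ j := by positivity
  set R : ℝ := (2 : ℝ) ^ j with hRdef
  set v : Euc d := vK d j k with hv
  have step1 : ∫ x, F (Tt d j k x) = ∫ x, (fun y => F (R • y)) (x + R⁻¹ • v) := by
    congr 1
    funext x
    simp only []
    rw [smul_add, smul_smul, mul_inv_cancel₀ (ne_of_gt hR), one_smul]
    rfl
  rw [step1, integral_add_right_eq_self (fun y => F (R • y)) (R⁻¹ • v),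
    MeasureTheory.Measure.integral_comp_smul_of_nonneg (μ := volume) F R (hR := hR.le),
    finrank_euclideanSpace_fin, smul_eq_mul]
section
variable (d j : ℕ) (ψ : Euc d → ℝ)

lemma continuous_psiK (hψ : Continuous ψ) (k : Fin d → Fin (2 ^ j)) :
    Continuous (psiK d j ψ k) := by
  have : psiK d j ψ k = fun x => Real.sqrt ((2 : ℝ) ^ (d * j)) * ψ (Tt d j k x) := by
    funext x; exact psiK_eq d j ψ k x
  rw [this]
  exact continuous_const.mul (hψ.comp (continuous_Tt d j k))

lemma psiK_zero_outside (hψsupp : Function.support ψ ⊆ {x : Euc d | ∀ i, x i ∈ Set.Ioo (-1 : ℝ) 1})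
    (k : Fin d → Fin (2 ^ j)) (x : Euc d) (hx : x ∉ Bx d j k) : psiK d j ψ k x = 0 := by
  by_contra h0
  exact hx (support_psiK d j ψ hψsupp k h0)

lemma hasCompactSupport_psiK
    (hψsupp : Function.support ψ ⊆ {x : Euc d | ∀ i, x i ∈ Set.Ioo (-1 : ℝ) 1})
    (k : Fin d → Fin (2 ^ j)) : HasCompactSupport (psiK d j ψ k) := by
  apply HasCompactSupport.intro (isCompact_closedBall (0 : Euc d) (Real.sqrt d))
  intro x hx
  exact psiK_zero_outside d j ψ hψsupp k x (fun hmem => hx (Bx_subset_ball d j k hmem))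

lemma integral_psiK (hψint : (∫ x, ψ x) = 0) (k : Fin d → Fin (2 ^ j)) :
    (∫ x, psiK d j ψ k x) = 0 := by
  have : (∫ x, psiK d j ψ k x) = Real.sqrt ((2 : ℝ) ^ (d * j)) * ∫ x, ψ (Tt d j k x) := by
    rw [← integral_const_mul]
    congr 1; funext x; exact psiK_eq d j ψ k x
  rw [this, integral_comp_Tt, hψint, mul_zero, mul_zero]

lemma integral_psiK_sq (hψsq : (∫ x, (ψ x) ^ 2) = 1) (k : Fin d → Fin (2 ^ j)) :
    (∫ x, psiK d j ψ k x * psiK d j ψ k x) = 1 := by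
  have hm : (0:ℝ) ≤ (2 : ℝ) ^ (d * j) := by positivity
  have : (∫ x, psiK d j ψ k x * psiK d j ψ k x)
      = (2 : ℝ) ^ (d * j) * ∫ x, (fun y => ψ y ^ 2) (Tt d j k x) := by
    rw [← integral_const_mul]
    congr 1; funext x
    rw [psiK_eq]
    simp only []
    rw [sq]
    calc Real.sqrt ((2:ℝ) ^ (d * j)) * ψ (Tt d j k x) * (Real.sqrt ((2:ℝ) ^ (d * j)) * ψ (Tt d j k x))
        = (Real.sqrt ((2:ℝ) ^ (d * j)) * Real.sqrt ((2:ℝ) ^ (d * j))) * (ψ (Tt d j k x) * ψ (Tt d j k x)) := by ring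
      _ = (2:ℝ) ^ (d * j) * (ψ (Tt d j k x) * ψ (Tt d j k x)) := by rw [Real.mul_self_sqrt hm]
  rw [this, integral_comp_Tt d j k (fun y => ψ y ^ 2)]
  rw [hψsq, mul_one, ← pow_mul, mul_comm j d]
  field_simp

lemma integral_psiK_mul (hψsupp : Function.support ψ ⊆ {x : Euc d | ∀ i, x i ∈ Set.Ioo (-1 : ℝ) 1})
    {k k' : Fin d → Fin (2 ^ j)} (hkk : k ≠ k') :
    (∫ x, psiK d j ψ k x * psiK d j ψ k' x) = 0 := by
  have : ∀ x, psiK d j ψ k x * psiK d j ψ k' x = 0 := by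
    intro x
    by_cases h1 : psiK d j ψ k x = 0
    · rw [h1, zero_mul]
    by_cases h2 : psiK d j ψ k' x = 0
    · rw [h2, mul_zero]
    exfalso
    have hx1 : x ∈ Bx d j k := support_psiK d j ψ hψsupp k h1
    have hx2 : x ∈ Bx d j k' := support_psiK d j ψ hψsupp k' h2
    have : x ∈ Bx d j k ∩ Bx d j k' := ⟨hx1, hx2⟩
    rw [Bx_disjoint d j hkk] at this
    exact absurd this (Set.notMem_empty x)
  simp only [this, integral_zero]

end
section
variable (d j : ℕ) (ψ : Euc d → ℝ)

lemma continuous_stdGauss' : Continuous (fun x : Euc d => (2 * π) ^ (-(d : ℝ) / 2) * Real.exp (-‖x‖ ^ 2 / 2)) :=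
  continuous_const.mul (Real.continuous_exp.comp (((continuous_norm.pow 2).neg).div_const 2))

lemma sum_psiK_zero_outside
    (hψsupp : Function.support ψ ⊆ {x : Euc d | ∀ i, x i ∈ Set.Ioo (-1 : ℝ) 1})
    (c : (Fin d → Fin (2 ^ j)) → ℝ) (x : Euc d)
    (hx : x ∉ Metric.closedBall (0 : Euc d) (Real.sqrt d)) :
    (∑ k, c k * psiK d j ψ k x) = 0 := by
  refine Finset.sum_eq_zero fun k _ => ?_
  rw [psiK_zero_outside d j ψ hψsupp k x (fun hmem => hx (Bx_subset_ball d j k hmem)), mul_zero]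

lemma const_eq_aux (M : ℝ) (hM : 0 < M) :
    (2:ℝ) ^ (-(j:ℝ) * ((d:ℝ)/2 + 1)) * M⁻¹
      = (M * (2:ℝ)^j * Real.sqrt ((2:ℝ)^(d*j)))⁻¹ := by
  have h1 : Real.sqrt ((2:ℝ)^(d*j)) = (2:ℝ) ^ ((((d*j : ℕ)):ℝ)/2) := by
    rw [Real.sqrt_eq_rpow, ← Real.rpow_natCast (2:ℝ) (d*j), ← Real.rpow_mul (by norm_num)]
    congr 1
    ring
  have h2 : ((2:ℝ)^j : ℝ) = (2:ℝ) ^ ((j:ℕ):ℝ) := (Real.rpow_natCast 2 j).symm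
  rw [h1, h2, mul_assoc, ← Real.rpow_add (by norm_num : (0:ℝ) < 2), mul_inv,
    ← Real.rpow_neg (by norm_num : (0:ℝ) ≤ 2)]
  rw [show (-(j:ℝ)) * ((d:ℝ)/2 + 1) = -(((j:ℕ):ℝ) + ((((d*j : ℕ)):ℝ))/2) by push_cast; ring]
  ring

end
section
variable (d j : ℕ) (ψ : Euc d → ℝ)

lemma lipschitz_const_mul_psiTt {M : ℝ} (hM : 0 < M)
    (hψlip : LipschitzWith (Real.toNNReal M) ψ) (k : Fin d → Fin (2 ^ j))
    (c : ℝ) (hc : |c| * (M * (2:ℝ)^j) ≤ 1) :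
    LipschitzWith 1 (fun x => c * ψ (Tt d j k x)) := by
  have hR : (0:ℝ) < (2:ℝ)^j := by positivity
  apply LipschitzWith.of_dist_le_mul
  intro x y
  rw [NNReal.coe_one, one_mul, Real.dist_eq, ← mul_sub, abs_mul]
  have h1 : |ψ (Tt d j k x) - ψ (Tt d j k y)| ≤ M * dist (Tt d j k x) (Tt d j k y) := by
    have := hψlip.dist_le_mul (Tt d j k x) (Tt d j k y)
    rwa [Real.coe_toNNReal _ hM.le, Real.dist_eq] at this
  have h2 : dist (Tt d j k x) (Tt d j k y) ≤ (2:ℝ)^j * dist x y := by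
    have := (lipschitz_Tt d j k).dist_le_mul x y
    rwa [Real.coe_toNNReal _ hR.le] at this
  have h3 : |ψ (Tt d j k x) - ψ (Tt d j k y)| ≤ M * ((2:ℝ)^j * dist x y) :=
    h1.trans (by nlinarith)
  calc |c| * |ψ (Tt d j k x) - ψ (Tt d j k y)| ≤ |c| * (M * ((2:ℝ)^j * dist x y)) := by
        exact mul_le_mul_of_nonneg_left h3 (abs_nonneg c)
    _ = (|c| * (M * (2:ℝ)^j)) * dist x y := by ring
    _ ≤ 1 * dist x y := mul_le_mul_of_nonneg_right hc dist_nonneg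
    _ = dist x y := one_mul _

end

/-- **Wasserstein separation of perturbed Gaussian densities
(key step of Theorem 5).**
If `ψ` is a Lipschitz `C¹` bump supported in `(-1,1)^d` with `∫ψ = 0` and
`∫ψ² = 1`, `M ≥ Lip(ψ)`, and both perturbed densities `g_ε, g_{ε'}` are
nonnegative, then `W₁(g_ε, g_{ε'}) ≥ 2 c₁ 2^{-j(d/2+1)} M⁻¹ ω(ε, ε')`, where
`ω` is the Hamming distance. -/
theorem wasserstein_separation_perturbed_gaussians
    (d : ℕ) (hd : 1 ≤ d) (j : ℕ) (hj : 0 < j)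
    (ψ : Euc d → ℝ) (hψdiff : ContDiff ℝ 1 ψ)
    (M : ℝ) (hM : 0 < M) (hψlip : LipschitzWith (Real.toNNReal M) ψ)
    (hψsupp : Function.support ψ ⊆ {x : Euc d | ∀ i, x i ∈ Set.Ioo (-1 : ℝ) 1})
    (hψint : (∫ x, ψ x) = 0) (hψsq : (∫ x, (ψ x) ^ 2) = 1)
    (c₁ : ℝ) (hc₁ : 0 < c₁)
    (ε ε' : (Fin d → Fin (2 ^ j)) → ℝ)
    (hε : ∀ k, ε k = 1 ∨ ε k = -1) (hε' : ∀ k, ε' k = 1 ∨ ε' k = -1)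
    (hpos : ∀ x, 0 ≤ gPerturbed d j ψ c₁ ε x)
    (hpos' : ∀ x, 0 ≤ gPerturbed d j ψ c₁ ε' x) :
    2 * c₁ * (2 : ℝ) ^ (-(j : ℝ) * ((d : ℝ) / 2 + 1)) * M⁻¹ *
        ((Finset.univ.filter fun k => ε k ≠ ε' k).card : ℝ)
      ≤ W1 (volume.withDensity fun x => ENNReal.ofReal (gPerturbed d j ψ c₁ ε x))
          (volume.withDensity fun x => ENNReal.ofReal (gPerturbed d j ψ c₁ ε' x)) := by
  classical
  have hψc : Continuous ψ := hψdiff.continuous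
  set g : Euc d → ℝ := gPerturbed d j ψ c₁ ε with hgdef
  set g' : Euc d → ℝ := gPerturbed d j ψ c₁ ε' with hg'def
  -- basic continuity facts
  have hpsiKc : ∀ k, Continuous (psiK d j ψ k) := continuous_psiK d j ψ hψc
  have hpsiKcs : ∀ k, HasCompactSupport (psiK d j ψ k) := hasCompactSupport_psiK d j ψ hψsupp
  have hIpsiK : ∀ k, Integrable (psiK d j ψ k) := fun k =>
    (hpsiKc k).integrable_of_hasCompactSupport (hpsiKcs k)
  have hgcont : Continuous g := by
    rw [hgdef]
    unfold gPerturbed stdGauss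
    exact (continuous_stdGauss' d).add (continuous_const.mul
      (continuous_finset_sum _ fun k _ => continuous_const.mul (hpsiKc k)))
  have hg'cont : Continuous g' := by
    rw [hg'def]
    unfold gPerturbed stdGauss
    exact (continuous_stdGauss' d).add (continuous_const.mul
      (continuous_finset_sum _ fun k _ => continuous_const.mul (hpsiKc k)))
  -- the difference Δ
  set Δ : Euc d → ℝ := fun x => c₁ * ∑ k, (ε k - ε' k) * psiK d j ψ k x with hΔdef
  have hΔ : ∀ x, g x - g' x = Δ x := by
    intro x
    rw [hgdef, hg'def, hΔdef]
    simp only [gPerturbed]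
    have : ∑ k, (ε k - ε' k) * psiK d j ψ k x
        = (∑ k, ε k * psiK d j ψ k x) - ∑ k, ε' k * psiK d j ψ k x := by
      rw [← Finset.sum_sub_distrib]
      exact Finset.sum_congr rfl fun k _ => by ring
    rw [this]
    ring
  have hΔcont : Continuous Δ := by
    rw [hΔdef]
    exact continuous_const.mul (continuous_finset_sum _ fun k _ => continuous_const.mul (hpsiKc k))
  have hΔvan : ∀ x, x ∉ Metric.closedBall (0 : Euc d) (Real.sqrt d) → Δ x = 0 := by
    intro x hx
    rw [hΔdef]
    simp only []
    rw [sum_psiK_zero_outside d j ψ hψsupp _ x hx, mul_zero]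
  have hΔcs : HasCompactSupport Δ :=
    HasCompactSupport.intro (isCompact_closedBall _ _) hΔvan
  have hΔint : Integrable Δ := hΔcont.integrable_of_hasCompactSupport hΔcs
  -- integral of Δ is zero
  have hintΔ : (∫ x, Δ x) = 0 := by
    rw [hΔdef]
    simp only []
    rw [integral_const_mul, integral_finset_sum _ (fun k _ => (hIpsiK k).const_mul _)]
    have : ∀ k ∈ Finset.univ, (∫ x, (ε k - ε' k) * psiK d j ψ k x) = 0 := by
      intro k _
      rw [integral_const_mul, integral_psiK d j ψ hψint k, mul_zero]
    rw [Finset.sum_congr rfl this, Finset.sum_const, smul_zero, mul_zero]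
  -- product with a continuous function is integrable
  have hΔmul_int : ∀ h : Euc d → ℝ, Continuous h → Integrable (fun x => Δ x * h x) :=
    fun h hc => (hΔcont.mul hc).integrable_of_hasCompactSupport (hΔcs.mul_right)
  -- measures and integrals against them
  set P := volume.withDensity fun x => ENNReal.ofReal (g x) with hPdef
  set Q := volume.withDensity fun x => ENNReal.ofReal (g' x) with hQdef
  have hgmeas : Measurable fun x => (g x).toNNReal := hgcont.measurable.real_toNNReal
  have hg'meas : Measurable fun x => (g' x).toNNReal := hg'cont.measurable.real_toNNReal
  have hint : ∀ h : Euc d → ℝ, (∫ x, h x ∂P) = ∫ x, g x * h x := by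
    intro h
    rw [hPdef]
    rw [show (fun x => ENNReal.ofReal (g x)) = (fun x => ((g x).toNNReal : ℝ≥0∞)) from rfl]
    rw [integral_withDensity_eq_integral_smul hgmeas h]
    apply integral_congr_ae
    filter_upwards with x
    rw [NNReal.smul_def, smul_eq_mul, Real.coe_toNNReal _ (hpos x)]
  have hint' : ∀ h : Euc d → ℝ, (∫ x, h x ∂Q) = ∫ x, g' x * h x := by
    intro h
    rw [hQdef]
    rw [show (fun x => ENNReal.ofReal (g' x)) = (fun x => ((g' x).toNNReal : ℝ≥0∞)) from rfl]
    rw [integral_withDensity_eq_integral_smul hg'meas h]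
    apply integral_congr_ae
    filter_upwards with x
    rw [NNReal.smul_def, smul_eq_mul, Real.coe_toNNReal _ (hpos' x)]
  -- difference of integrals
  have hdiff : ∀ h : Euc d → ℝ, Continuous h → Integrable (fun x => g x * h x) →
      (∫ x, g x * h x) - (∫ x, g' x * h x) = ∫ x, Δ x * h x := by
    intro h hc hi
    have h2 : (fun x => g' x * h x) = fun x => g x * h x - Δ x * h x :=
      funext fun x => by rw [← hΔ x]; ring
    rw [h2, integral_sub hi (hΔmul_int h hc)]
    ring
  -- the witness function f
  set a : ℝ := (M * (2:ℝ)^j * Real.sqrt ((2:ℝ)^(d*j)))⁻¹ with hadef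
  have hR : (0:ℝ) < (2:ℝ)^j := by positivity
  have hsq : (0:ℝ) < Real.sqrt ((2:ℝ)^(d*j)) := Real.sqrt_pos.mpr (by positivity)
  have ha : 0 < a := by rw [hadef]; positivity
  set θ : (Fin d → Fin (2 ^ j)) → ℝ := fun k => (ε k - ε' k) / 2 with hθdef
  have hθabs : ∀ k, |θ k| ≤ 1 := by
    intro k
    rw [hθdef]
    rcases hε k with h1 | h1 <;> rcases hε' k with h2 | h2 <;>
      simp [h1, h2] <;> norm_num
  set f : Euc d → ℝ := fun x => ∑ k, (θ k * a) * psiK d j ψ k x with hfdef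
  have hfLip : LipschitzWith 1 f := by
    rw [hfdef]
    apply lipschitz_sum_of_disjoint (fun k x => (θ k * a) * psiK d j ψ k x) (Bx d j)
    · intro k
      have heq : (fun x => (θ k * a) * psiK d j ψ k x)
          = fun x => (θ k * a * Real.sqrt ((2:ℝ)^(d*j))) * ψ (Tt d j k x) :=
        funext fun x => by rw [psiK_eq]; ring
      rw [heq]
      apply lipschitz_const_mul_psiTt d j ψ hM hψlip k
      have h1 : |θ k * a * Real.sqrt ((2:ℝ)^(d*j))| = |θ k| * (a * Real.sqrt ((2:ℝ)^(d*j))) := by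
        rw [abs_mul, abs_mul, abs_of_pos ha, abs_of_pos hsq, mul_assoc]
      rw [h1]
      have h2 : a * Real.sqrt ((2:ℝ)^(d*j)) * (M * (2:ℝ)^j) = 1 := by
        rw [hadef]
        field_simp
      calc |θ k| * (a * Real.sqrt ((2:ℝ)^(d*j))) * (M * (2:ℝ)^j)
          = |θ k| * (a * Real.sqrt ((2:ℝ)^(d*j)) * (M * (2:ℝ)^j)) := by ring
        _ = |θ k| * 1 := by rw [h2]
        _ ≤ 1 := by rw [mul_one]; exact hθabs k
    · intro k x hx
      rw [psiK_zero_outside d j ψ hψsupp k x hx, mul_zero]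
    · intro k k' hkk
      exact Bx_disjoint d j hkk
  have hfcont : Continuous f := hfLip.continuous
  have hfcs : HasCompactSupport f := by
    apply HasCompactSupport.intro (isCompact_closedBall (0 : Euc d) (Real.sqrt d))
    intro x hx
    rw [hfdef]
    exact sum_psiK_zero_outside d j ψ hψsupp _ x hx
  have hgf_int : Integrable (fun x => g x * f x) :=
    (hgcont.mul hfcont).integrable_of_hasCompactSupport hfcs.mul_left
  -- the main integral computation
  have hkey : (∫ x, Δ x * f x) = c₁ * a * (2 * ((Finset.univ.filter fun k => ε k ≠ ε' k).card : ℝ)) := by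
    have hexp : ∀ x, Δ x * f x
        = c₁ * ∑ k, ∑ k', ((ε k - ε' k) * (θ k' * a)) * (psiK d j ψ k x * psiK d j ψ k' x) := by
      intro x
      rw [hΔdef, hfdef]
      simp only []
      rw [mul_assoc, Finset.sum_mul_sum]
      congr 1
      refine Finset.sum_congr rfl fun k _ => Finset.sum_congr rfl fun k' _ => by ring
    rw [show (fun x => Δ x * f x) = fun x => c₁ * ∑ k, ∑ k', ((ε k - ε' k) * (θ k' * a)) * (psiK d j ψ k x * psiK d j ψ k' x) from funext hexp]
    have hintkk : ∀ (k k' : Fin d → Fin (2 ^ j)),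
        Integrable (fun x => ((ε k - ε' k) * (θ k' * a)) * (psiK d j ψ k x * psiK d j ψ k' x)) :=
      fun k k' => (((hpsiKc k).mul (hpsiKc k')).integrable_of_hasCompactSupport
        ((hpsiKcs k).mul_right)).const_mul _
    rw [integral_const_mul, integral_finset_sum _ (fun k _ => integrable_finset_sum _ (fun k' _ => hintkk k k'))]
    have hinner : ∀ k ∈ Finset.univ, (∫ x, ∑ k', ((ε k - ε' k) * (θ k' * a)) * (psiK d j ψ k x * psiK d j ψ k' x))
        = (ε k - ε' k) * (θ k * a) := by
      intro k _
      rw [integral_finset_sum _ (fun k' _ => hintkk k k')]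
      rw [Finset.sum_eq_single k]
      · rw [integral_const_mul, integral_psiK_sq d j ψ hψsq k, mul_one]
      · intro k' _ hkk
        rw [integral_const_mul, integral_psiK_mul d j ψ hψsupp (Ne.symm hkk), mul_zero]
      · intro h
        exact absurd (Finset.mem_univ k) h
    rw [Finset.sum_congr rfl hinner]
    have hterm : ∀ k, (ε k - ε' k) * (θ k * a) = a * (if ε k ≠ ε' k then 2 else 0) := by
      intro k
      rcases hε k with h1 | h1 <;> rcases hε' k with h2 | h2 <;>
        simp only [hθdef, h1, h2]
      · rw [if_neg (show ¬((1:ℝ) ≠ 1) from fun h => h rfl)]; norm_num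
      · rw [if_pos (show (1:ℝ) ≠ -1 by norm_num)]; ring
      · rw [if_pos (show (-1:ℝ) ≠ 1 by norm_num)]; ring
      · rw [if_neg (show ¬((-1:ℝ) ≠ -1) from fun h => h rfl)]; norm_num
    rw [Finset.sum_congr rfl (fun k _ => hterm k), ← Finset.mul_sum, ← Finset.sum_filter]
    rw [Finset.sum_const, nsmul_eq_mul]
    ring
  -- value at the witness
  have hval : (∫ x, f x ∂P) - (∫ x, f x ∂Q)
      = c₁ * a * (2 * ((Finset.univ.filter fun k => ε k ≠ ε' k).card : ℝ)) := by
    rw [hint f, hint' f, hdiff f hfcont hgf_int, hkey]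
  -- bound for arbitrary Lipschitz functions
  set C : ℝ := ∫ x, |Δ x| * ‖x‖ with hCdef
  have hC0 : 0 ≤ C := integral_nonneg fun x => mul_nonneg (abs_nonneg _) (norm_nonneg _)
  have hCint : Integrable (fun x => |Δ x| * ‖x‖) := by
    apply (hΔcont.abs.mul continuous_norm).integrable_of_hasCompactSupport
    exact ((hΔcs.comp_left (abs_zero)).mul_right)
  have hbound : ∀ φ : Euc d → ℝ, LipschitzWith 1 φ → (∫ x, φ x ∂P) - (∫ x, φ x ∂Q) ≤ C := by
    intro φ hφ
    rw [hint φ, hint' φ]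
    by_cases hig : Integrable (fun x => g x * φ x)
    · rw [hdiff φ hφ.continuous hig]
      have int1 : Integrable (fun x => Δ x * (φ x - φ 0)) :=
        hΔmul_int _ (hφ.continuous.sub continuous_const)
      have int2 : Integrable (fun x => (φ 0) * Δ x) := hΔint.const_mul _
      have hsplit : (fun x => Δ x * φ x) = fun x => Δ x * (φ x - φ 0) + (φ 0) * Δ x :=
        funext fun x => by ring
      rw [hsplit, integral_add int1 int2, integral_const_mul, hintΔ, mul_zero, add_zero]
      apply integral_mono int1 hCint
      intro x
      have hφx : |φ x - φ 0| ≤ ‖x‖ := by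
        have := hφ.dist_le_mul x 0
        rw [NNReal.coe_one, one_mul, dist_zero_right] at this
        rw [← Real.dist_eq]
        exact this
      calc Δ x * (φ x - φ 0) ≤ |Δ x * (φ x - φ 0)| := le_abs_self _
        _ = |Δ x| * |φ x - φ 0| := abs_mul _ _
        _ ≤ |Δ x| * ‖x‖ := mul_le_mul_of_nonneg_left hφx (abs_nonneg _)
    · have hig' : ¬ Integrable (fun x => g' x * φ x) := by
        intro hig2
        apply hig
        have h2 : (fun x => g x * φ x) = fun x => g' x * φ x + Δ x * φ x :=
          funext fun x => by rw [← hΔ x]; ring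
        rw [h2]
        exact hig2.add (hΔmul_int φ hφ.continuous)
      rw [integral_undef hig, integral_undef hig', sub_zero]
      exact hC0
  have hbdd : BddAbove (Set.range fun φ : {f : Euc d → ℝ // LipschitzWith 1 f} =>
      (∫ x, φ.1 x ∂P) - ∫ x, φ.1 x ∂Q) := by
    refine ⟨C, ?_⟩
    rintro y ⟨⟨φ, hφ⟩, rfl⟩
    exact hbound φ hφ
  have hle : (∫ x, f x ∂P) - (∫ x, f x ∂Q) ≤ W1 P Q := by
    rw [W1]
    exact le_ciSup hbdd ⟨f, hfLip⟩
  -- conclude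
  have hconst : 2 * c₁ * (2 : ℝ) ^ (-(j : ℝ) * ((d : ℝ) / 2 + 1)) * M⁻¹ *
        ((Finset.univ.filter fun k => ε k ≠ ε' k).card : ℝ)
      = c₁ * a * (2 * ((Finset.univ.filter fun k => ε k ≠ ε' k).card : ℝ)) := by
    rw [hadef, ← const_eq_aux d j M hM]
    ring
  rw [hconst, ← hval]
  exact hle

end
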